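/- Let u be a measurable function on a measure space with 0 ≤ u ≤ M := ess sup u < ∞, supported on E₀ = {u > 0} with |E₀| < ∞, and suppose |E_t| = |E₀| for a.e. t ∈ (0, M), where E_t = {u > t}. Then u = M·χ_{E₀} almost everywhere; if moreover ∫ u = 1, then M = 1/|E₀| and u = χ_{E₀}/|E₀| a.e. -/

import Mathlib

open MeasureTheory

/-- If `0 ≤ u ≤ M = ess sup u`, `E₀ = {u > 0}` has finite measure and
`|E_t| = |E₀|` for a.e. `t ∈ (0, M)`, then `u = M·χ_{E₀}` a.e.; if moreover
`∫u = 1`, then `M = 1/|E₀|` and `u = χ_{E₀}/|E₀|` a.e. -/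
theorem stmt18 {α : Type*} [MeasurableSpace α] (μ : Measure α)
    (u : α → ℝ) (hu_meas : Measurable u)
    (hnn : ∀ᵐ x ∂μ, 0 ≤ u x)
    (M : ℝ) (hM : M = essSup u μ)
    (hub : ∀ᵐ x ∂μ, u x ≤ M)
    (hE0 : μ {x | 0 < u x} < ⊤)
    (hlevel : ∀ᵐ t ∂(volume.restrict (Set.Ioo (0:ℝ) M)),
      μ {x | t < u x} = μ {x | 0 < u x}) :
    (∀ᵐ x ∂μ, u x = M * Set.indicator {x | 0 < u x} (fun _ => (1:ℝ)) x) ∧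
      ((Integrable u μ ∧ ∫ x, u x ∂μ = 1) →
        M = 1 / (μ {x | 0 < u x}).toReal ∧
          ∀ᵐ x ∂μ, u x =
            Set.indicator {x | 0 < u x} (fun _ => 1 / (μ {x | 0 < u x}).toReal) x) := by
  have hE0meas : MeasurableSet {x | 0 < u x} :=
    measurableSet_lt measurable_const hu_meas
  have hmain : ∀ᵐ x ∂μ, u x = M * Set.indicator {x | 0 < u x} (fun _ => (1:ℝ)) x := by
    rcases le_or_gt M 0 with hM0 | hM0
    · filter_upwards [hnn, hub] with x h0 h1
      have hx0 : u x = 0 := le_antisymm (h1.trans hM0) h0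
      simp [hx0, Set.indicator_apply]
    · -- M > 0 : choose a sequence tₙ → M of good levels
      have hexist : ∀ n : ℕ, ∃ t : ℝ, (M - M / (n + 1) < t ∧ t < M) ∧
          μ {x | t < u x} = μ {x | 0 < u x} := by
        intro n
        by_contra hcon
        push_neg at hcon
        have hsub : Set.Ioo (M - M / (n + 1)) M ⊆
            {t | ¬ μ {x | t < u x} = μ {x | 0 < u x}} ∩ Set.Ioo 0 M := by
          intro t ht
          have h1 : (0:ℝ) ≤ M - M / (n + 1) := by
            have : M / ((n:ℝ) + 1) ≤ M := by
              rw [div_le_iff₀ (by positivity)]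
              nlinarith [Nat.cast_nonneg (α := ℝ) n]
            linarith
          refine ⟨hcon t ⟨ht.1, ht.2⟩, lt_of_le_of_lt h1 ht.1, ht.2⟩
        have h0 : volume ({t | ¬ μ {x | t < u x} = μ {x | 0 < u x}} ∩ Set.Ioo 0 M) = 0 := by
          have := hlevel
          rw [ae_iff] at this
          rwa [Measure.restrict_apply' measurableSet_Ioo] at this
        have hle : volume (Set.Ioo (M - M / (n + 1)) M) = 0 :=
          measure_mono_null hsub h0
        rw [Real.volume_Ioo] at hle
        have : M - (M - M / (n + 1)) > 0 := by
          have : M / ((n:ℝ) + 1) > 0 := by positivity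
          linarith
        simp [ENNReal.ofReal_eq_zero] at hle
        linarith
      choose t ht hμt using hexist
      -- each slab {0 < u ≤ t n} is null
      have hslab : ∀ n : ℕ, μ {x | 0 < u x ∧ u x ≤ t n} = 0 := by
        intro n
        have htpos : 0 < t n := by
          have h1 : (0:ℝ) ≤ M - M / (n + 1) := by
            have : M / ((n:ℝ) + 1) ≤ M := by
              rw [div_le_iff₀ (by positivity)]
              nlinarith [Nat.cast_nonneg (α := ℝ) n]
            linarith
          linarith [(ht n).1]
        have hsub : {x | t n < u x} ⊆ {x | 0 < u x} := fun x hx =>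
          lt_trans htpos hx
        have hdiff : {x | 0 < u x} \ {x | t n < u x} = {x | 0 < u x ∧ u x ≤ t n} := by
          ext x
          simp only [Set.mem_diff, Set.mem_setOf_eq, not_lt]
        have hmeas : MeasurableSet {x | t n < u x} :=
          measurableSet_lt measurable_const hu_meas
        have := measure_diff hsub hmeas.nullMeasurableSet
          (lt_of_le_of_lt (measure_mono hsub) hE0).ne
        rw [hdiff, hμt n] at this
        rw [this, tsub_self]
      have hnull : μ {x | 0 < u x ∧ u x < M} = 0 := by
        have hsub : {x | 0 < u x ∧ u x < M} ⊆ ⋃ n, {x | 0 < u x ∧ u x ≤ t n} := by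
          intro x hx
          obtain ⟨n, hn⟩ := exists_nat_gt (M / (M - u x))
          refine Set.mem_iUnion.2 ⟨n, hx.1, ?_⟩
          have hd : 0 < M - u x := by linarith [hx.2]
          have h1 : M < (M - u x) * ((n:ℝ) + 1) := by
            rw [div_lt_iff₀ hd] at hn
            nlinarith
          have h2 : M / ((n:ℝ) + 1) < M - u x := by
            rw [div_lt_iff₀ (by positivity)]
            linarith
          have := (ht n).1
          linarith
        exact measure_mono_null hsub (measure_iUnion_null hslab)
      have hae : ∀ᵐ x ∂μ, ¬ (0 < u x ∧ u x < M) := by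
        rw [ae_iff]; simpa using hnull
      filter_upwards [hnn, hub, hae] with x h0 h1 h2
      rcases lt_or_eq_of_le h0 with hpos | hzero
      · have : ¬ u x < M := fun h => h2 ⟨hpos, h⟩
        have hux : u x = M := le_antisymm h1 (not_lt.1 this)
        simp [Set.indicator_apply, Set.mem_setOf_eq, hpos, hux, if_pos hM0]
      · simp [Set.indicator_apply, Set.mem_setOf_eq, ← hzero]
  refine ⟨hmain, fun ⟨hint, hint1⟩ => ?_⟩
  have hIcalc : ∫ x, u x ∂μ = M * (μ {x | 0 < u x}).toReal := by
    rw [integral_congr_ae hmain, integral_const_mul,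
      integral_indicator_const (1:ℝ) hE0meas]
    simp [mul_comm, Measure.real]
  have hM1 : M * (μ {x | 0 < u x}).toReal = 1 := by rw [← hIcalc, hint1]
  have htne : (μ {x | 0 < u x}).toReal ≠ 0 := by
    intro h; rw [h, mul_zero] at hM1; exact one_ne_zero hM1.symm
  have hMval : M = 1 / (μ {x | 0 < u x}).toReal := by
    field_simp
    linarith [hM1]
  refine ⟨hMval, ?_⟩
  filter_upwards [hmain] with x hx
  rw [hx, hMval]
  by_cases hmem : x ∈ {x | 0 < u x}
  · rw [Set.indicator_of_mem hmem, Set.indicator_of_mem hmem, mul_one]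
  · rw [Set.indicator_of_notMem hmem, Set.indicator_of_notMem hmem, mul_zero]
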